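/- Let p and q be distinct sentential variables. Then Op ∧ (¬p ≻ ¬q) ⊨_Δ Oq, i.e., in every Δ model M, ⟦Op ∧ (¬p ≻ ¬q)⟧_M ⊆ ⟦Oq⟧_M. -/

import Mathlib

/-- Formulas of the preference language L, generated from sentential
variables by negation, conjunction, and the binary connective ⪰. -/
inductive Fml (α : Type) : Type where
  | var : α → Fml α
  | neg : Fml α → Fml α
  | conj : Fml α → Fml α → Fml α
  | succeq : Fml α → Fml α → Fml α

namespace Fml

variable {α : Type}

/-- φ∨ψ := ¬(¬φ∧¬ψ) -/
def disj (φ ψ : Fml α) : Fml α := neg (conj (neg φ) (neg ψ))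
/-- φ→ψ := ¬φ∨ψ -/
def impl (φ ψ : Fml α) : Fml α := disj (neg φ) ψ
/-- φ↔ψ := (φ→ψ)∧(ψ→φ) -/
def iffF (φ ψ : Fml α) : Fml α := conj (impl φ ψ) (impl ψ φ)
/-- φ≻ψ := (φ⪰ψ)∧¬(ψ⪰φ) -/
def succ (φ ψ : Fml α) : Fml α := conj (succeq φ ψ) (neg (succeq ψ φ))
/-- ⊤ := p→p for a fixed variable p -/
def topF (p : α) : Fml α := impl (var p) (var p)
/-- ⊥ := ¬⊤ -/
def botF (p : α) : Fml α := neg (topF p)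
/-- ◻φ := ¬(¬φ⪰¬φ) -/
def box (φ : Fml α) : Fml α := neg (succeq (neg φ) (neg φ))
/-- ◇φ := φ⪰φ -/
def dia (φ : Fml α) : Fml α := succeq φ φ
/-- Conditional obligation C(φ,ψ) := (φ∧ψ) ≻ (φ∧¬ψ) -/
def Cond (φ ψ : Fml α) : Fml α := succ (conj φ ψ) (conj φ (neg ψ))
/-- Obligation Oψ := C(⊤,ψ), where ⊤ uses the fixed variable p -/
def Ob (p : α) (ψ : Fml α) : Fml α := Cond (topF p) ψ
/-- Permission Pψ := ¬O¬ψ -/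
def Perm (p : α) (ψ : Fml α) : Fml α := neg (Ob p (neg ψ))

end Fml

/-- A model (W,S,U,T): a nonempty set of worlds, a selection function
picking a member of each nonempty set of worlds, a real-valued utility
function, and a truth-assignment. -/
structure Model (α : Type) : Type 1 where
  W : Type
  nonempty : Nonempty W
  S : W → Set W → W
  S_mem : ∀ (w : W) (A : Set W), A.Nonempty → S w A ∈ A
  U : W → ℝ
  T : α → Set W

open Classical in
/-- The proposition ⟦φ⟧_M expressed by φ in the model M. -/
noncomputable def sat {α : Type} (M : Model α) : Fml α → Set M.W
  | .var p => M.T p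
  | .neg θ => (sat M θ)ᶜ
  | .conj θ ψ => sat M θ ∩ sat M ψ
  | .succeq θ ψ =>
      if sat M θ = ∅ ∨ sat M ψ = ∅ then ∅
      else {w | M.U (M.S w (sat M θ)) ≥ M.U (M.S w (sat M ψ))}

/-- φ ⊨ ψ : in every model, ⟦φ⟧ ⊆ ⟦ψ⟧. -/
def Implies {α : Type} (φ ψ : Fml α) : Prop :=
  ∀ M : Model α, sat M φ ⊆ sat M ψ

/-- ⊨ φ : in every model, ⟦φ⟧ = W. -/
def Valid {α : Type} (φ : Fml α) : Prop :=
  ∀ M : Model α, sat M φ = Set.univ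

/-- S is a selection function on W = 𝒫(Props): for each world w and
nonempty set A of worlds, S w A ∈ A. -/
def IsSelection {α : Type} (S : Set α → Set (Set α) → Set α) : Prop :=
  ∀ (w : Set α) (A : Set (Set α)), A.Nonempty → S w A ∈ A

/-- S is Δ-based: no w₁ ∈ A has w Δ w₁ properly included in w Δ S(w,A). -/
def DeltaBased {α : Type} (S : Set α → Set (Set α) → Set α) : Prop :=
  ∀ (w : Set α) (A : Set (Set α)), A.Nonempty →
    ¬ ∃ w1 ∈ A, symmDiff w w1 ⊂ symmDiff w (S w A)

/-- A Δ model: W = 𝒫(Props), T(p) = {w | p ∈ w}, and a Δ-based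
selection function. -/
structure DeltaModel (α : Type) : Type where
  S : Set α → Set (Set α) → Set α
  S_mem : ∀ (w : Set α) (A : Set (Set α)), A.Nonempty → S w A ∈ A
  delta : DeltaBased S
  U : Set α → ℝ

/-- The underlying model of a Δ model. -/
def DeltaModel.toModel {α : Type} (M : DeltaModel α) : Model α where
  W := Set α
  nonempty := ⟨∅⟩
  S := M.S
  S_mem := M.S_mem
  U := M.U
  T := fun p => {w : Set α | p ∈ w}

/-- φ ⊨_Δ ψ : in every Δ model, ⟦φ⟧ ⊆ ⟦ψ⟧. -/
def DeltaImplies {α : Type} (φ ψ : Fml α) : Prop :=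
  ∀ M : DeltaModel α, sat M.toModel φ ⊆ sat M.toModel ψ

/-- The g-distance between two worlds: the (possibly infinite) sum of the
weights of the variables in their symmetric difference. -/
noncomputable def gdist {α : Type} (g : α → ℝ) (w0 w1 : Set α) : ENNReal :=
  ∑' v : ↥(symmDiff w0 w1), ENNReal.ofReal (g v)

/-- S is g-based: no w' ∈ A is strictly g-closer to w than S(w,A). -/
def GBased {α : Type} (g : α → ℝ) (S : Set α → Set (Set α) → Set α) : Prop :=
  ∀ (w : Set α) (A : Set (Set α)), A.Nonempty →
    ¬ ∃ w' ∈ A, gdist g w w' < gdist g w (S w A)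

/-- If b ∈ A and b is Δ-minimal in A relative to w, then a Δ-based selection
function must select b. -/
lemma sel_eq_of_min {α : Type} (M : DeltaModel α) (w : Set α) (A : Set (Set α))
    (hA : A.Nonempty) (b : Set α) (hb : b ∈ A)
    (hmin : ∀ x ∈ A, symmDiff w b ⊆ symmDiff w x) : M.S w A = b := by
  by_contra hne
  apply M.delta w A hA
  refine ⟨b, hb, hmin _ (M.S_mem w A hA), fun hsub => hne ?_⟩
  have h : symmDiff w b = symmDiff w (M.S w A) :=
    le_antisymm (hmin _ (M.S_mem w A hA)) hsub
  exact (symmDiff_right_injective w h).symm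

lemma sel_var {α : Type} (M : DeltaModel α) (w : Set α) (r : α) :
    M.S w {v : Set α | r ∈ v} = w ∪ {r} := by
  refine sel_eq_of_min M w {v : Set α | r ∈ v} ⟨({r} : Set α), rfl⟩ (w ∪ {r})
    (by simp) ?_
  intro x hx v hv
  rcases Set.mem_symmDiff.mp hv with ⟨hvw, hvu⟩ | ⟨hvu, hvw⟩
  · exact absurd (Or.inl hvw) hvu
  · rcases hvu with hvw' | hvr
    · exact absurd hvw' hvw
    · rcases hvr with rfl
      exact Set.mem_symmDiff.mpr (Or.inr ⟨hx, hvw⟩)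

lemma sel_nvar {α : Type} (M : DeltaModel α) (w : Set α) (r : α) :
    M.S w {v : Set α | r ∉ v} = w \ {r} := by
  refine sel_eq_of_min M w {v : Set α | r ∉ v} ⟨(∅ : Set α), by simp⟩ (w \ {r})
    (by simp) ?_
  intro x hx v hv
  rcases Set.mem_symmDiff.mp hv with ⟨hvw, hvu⟩ | ⟨hvu, hvw⟩
  · have hvr : v = r := by
      by_contra hvr
      exact hvu ⟨hvw, hvr⟩
    subst hvr
    exact Set.mem_symmDiff.mpr (Or.inl ⟨hvw, hx⟩)
  · exact absurd hvu.1 hvw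

open Classical in
lemma sat_succeq {α : Type} (M : Model α) (A B : Fml α) :
    sat M (Fml.succeq A B) = if sat M A = ∅ ∨ sat M B = ∅ then ∅
      else {w | M.U (M.S w (sat M A)) ≥ M.U (M.S w (sat M B))} := by
  rw [sat]

open Fml in
theorem stmt_11 {α : Type} (p q : α) (hpq : p ≠ q) (p0 : α) :
    DeltaImplies (conj (Ob p0 (var p)) (succ (neg (var p)) (neg (var q))))
      (Ob p0 (var q)) := by
  classical
  intro M w hw
  change Set α at w
  have hUS : M.toModel.U = M.U ∧ M.toModel.S = M.S := ⟨rfl, rfl⟩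
  have htop : sat M.toModel (topF p0) = Set.univ := by
    ext v
    simp [topF, Fml.impl, disj, sat]
  have hvar : ∀ r : α, sat M.toModel (var r) = {v : Set α | r ∈ v} := fun r => rfl
  have hc : ∀ r : α, sat M.toModel (conj (topF p0) (var r)) = {v : Set α | r ∈ v} := by
    intro r; show sat M.toModel (topF p0) ∩ _ = _
    rw [htop, hvar]; exact Set.univ_inter _
  have hcn : ∀ r : α, sat M.toModel (conj (topF p0) (neg (var r))) = {v : Set α | r ∉ v} := by
    intro r; show sat M.toModel (topF p0) ∩ (sat M.toModel (var r))ᶜ = _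
    rw [htop, hvar, Set.univ_inter]; rfl
  have hn : ∀ r : α, sat M.toModel (neg (var r)) = {v : Set α | r ∉ v} := by
    intro r; show (sat M.toModel (var r))ᶜ = _
    rw [hvar]; rfl
  have hEne : ∀ r : α, {v : Set α | r ∈ v} ≠ (∅ : Set (Set α)) :=
    fun r => Set.nonempty_iff_ne_empty.mp ⟨({r} : Set α), rfl⟩
  have hNne : ∀ r : α, {v : Set α | r ∉ v} ≠ (∅ : Set (Set α)) :=
    fun r => Set.nonempty_iff_ne_empty.mp ⟨(∅ : Set α), by simp⟩
  have key : ∀ r : α, w ∈ sat M.toModel (Ob p0 (var r)) ↔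
      M.U (w ∪ {r}) > M.U (w \ {r}) := by
    intro r
    have e : sat M.toModel (Ob p0 (var r)) =
        {x : Set α | M.U (M.S x {v : Set α | r ∈ v}) ≥ M.U (M.S x {v : Set α | r ∉ v})} ∩
          {x : Set α | M.U (M.S x {v : Set α | r ∉ v}) ≥ M.U (M.S x {v : Set α | r ∈ v})}ᶜ := by
      show sat M.toModel (succeq (conj (topF p0) (var r)) (conj (topF p0) (neg (var r)))) ∩
        (sat M.toModel (succeq (conj (topF p0) (neg (var r))) (conj (topF p0) (var r))))ᶜ = _
      rw [sat_succeq, sat_succeq, hc, hcn,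
        if_neg (by simp only [not_or]; exact ⟨hEne r, hNne r⟩), if_neg (by simp only [not_or]; exact ⟨hNne r, hEne r⟩)]
      rfl
    rw [e]
    simp only [Set.mem_inter_iff, Set.mem_compl_iff, Set.mem_setOf_eq, sel_var, sel_nvar]
    constructor
    · rintro ⟨_, h2⟩
      exact not_le.mp h2
    · intro h
      exact ⟨le_of_lt h, not_le.mpr h⟩
  obtain ⟨hOp, hsucc⟩ := hw
  have hp : M.U (w ∪ {p}) > M.U (w \ {p}) := (key p).mp hOp
  have hq' : M.U (w \ {p}) > M.U (w \ {q}) := by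
    have e : sat M.toModel (succ (neg (var p)) (neg (var q))) =
        {x : Set α | M.U (M.S x {v : Set α | p ∉ v}) ≥ M.U (M.S x {v : Set α | q ∉ v})} ∩
          {x : Set α | M.U (M.S x {v : Set α | q ∉ v}) ≥ M.U (M.S x {v : Set α | p ∉ v})}ᶜ := by
      show sat M.toModel (succeq (neg (var p)) (neg (var q))) ∩
        (sat M.toModel (succeq (neg (var q)) (neg (var p))))ᶜ = _
      rw [sat_succeq, sat_succeq, hn, hn,
        if_neg (by simp only [not_or]; exact ⟨hNne p, hNne q⟩), if_neg (by simp only [not_or]; exact ⟨hNne q, hNne p⟩)]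
      rfl
    rw [e] at hsucc
    simp only [Set.mem_inter_iff, Set.mem_compl_iff, Set.mem_setOf_eq, sel_nvar] at hsucc
    exact not_le.mp hsucc.2
  refine (key q).mpr ?_
  by_cases hqw : q ∈ w
  · rw [Set.union_eq_self_of_subset_right (Set.singleton_subset_iff.mpr hqw)]
    by_cases hpw : p ∈ w
    · rw [Set.union_eq_self_of_subset_right (Set.singleton_subset_iff.mpr hpw)] at hp
      linarith
    · rw [Set.diff_singleton_eq_self hpw] at hq'
      exact hq'
  · exfalso
    rw [Set.diff_singleton_eq_self hqw] at hq'
    by_cases hpw : p ∈ w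
    · rw [Set.union_eq_self_of_subset_right (Set.singleton_subset_iff.mpr hpw)] at hp
      linarith
    · rw [Set.diff_singleton_eq_self hpw] at hq'
      linarith
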